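/- Let K be a field, m, σ ≥ 1, E ∈ K^{m×σ} with rows e_1,…,e_m, and J ∈ K^{σ×σ}. Then the set of interpolants for (E,J) is a K[X]-submodule of K[X]^{1×m} which is free of rank m. -/

import Mathlib

open Polynomial Matrix

/-- Degree of a polynomial as an element of `WithBot ℤ`, with `degZ 0 = ⊥`. -/
noncomputable def degZ {K : Type*} [Field K] (p : Polynomial K) : WithBot ℤ :=
  p.degree.map (fun n : ℕ => (n : ℤ))

/-- The `s`-degree of a row vector `p`: `max_j (deg p_j + s_j)`. -/
noncomputable def sdeg {K : Type*} [Field K] {ι : Type*} [Fintype ι]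
    (s : ι → ℤ) (p : ι → Polynomial K) : WithBot ℤ :=
  Finset.univ.sup fun j => degZ (p j) + (s j : WithBot ℤ)

/-- `j` is the `s`-pivot index of the row `p`: the largest index at which the
`s`-degree of `p` is attained. -/
def IsPivotIndex {K : Type*} [Field K] {ι : Type*} [Fintype ι] [LinearOrder ι]
    (s : ι → ℤ) (p : ι → Polynomial K) (j : ι) : Prop :=
  degZ (p j) + (s j : WithBot ℤ) = sdeg s p ∧
    ∀ k, j < k → degZ (p k) + (s k : WithBot ℤ) ≠ sdeg s p

/-- `P` is in `s`-Popov form: it is nonsingular, the `s`-pivot entries are monic and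
on the diagonal, and in each column the nonpivot entries have degree less than
the pivot entry. -/
def IsPopov {K : Type*} [Field K] {m : ℕ} (s : Fin m → ℤ)
    (P : Matrix (Fin m) (Fin m) (Polynomial K)) : Prop :=
  P.det ≠ 0 ∧ (∀ i, IsPivotIndex s (P i) i) ∧ (∀ i, (P i i).Monic) ∧
    ∀ i j, i ≠ j → (P i j).degree < (P j j).degree

/-- `p` is an interpolant for `(E, J)`: `∑ i, (row i of E) ⋅ (p i)(J) = 0`. -/
def IsInterpolant {K : Type*} [Field K] {ι n : Type*} [Fintype ι] [Fintype n] [DecidableEq n]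
    (E : Matrix ι n K) (J : Matrix n n K) (p : ι → Polynomial K) : Prop :=
  ∑ i, Matrix.vecMul (E i) (Polynomial.aeval J (p i)) = 0

/-- `P` is an interpolation basis for `(E, J)`: its rows form a basis of the
`K[X]`-module of interpolants for `(E, J)`. -/
def IsInterpolationBasis {K : Type*} [Field K] {ι n : Type*} [Fintype ι] [Fintype n]
    [DecidableEq n] (E : Matrix ι n K) (J : Matrix n n K)
    (P : Matrix ι ι (Polynomial K)) : Prop :=
  LinearIndependent (Polynomial K) (fun i => P i) ∧
    (Submodule.span (Polynomial K) (Set.range fun i => P i) : Set (ι → Polynomial K))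
      = {p | IsInterpolant E J p}

/-- The product `Q ⋅ E`: the matrix over `K` whose `i`-th row is `∑ j, (E j) ⋅ (Q i j)(J)`. -/
noncomputable def polMulMat {K : Type*} [Field K] {κ ι n : Type*} [Fintype κ] [Fintype ι]
    [Fintype n] [DecidableEq n]
    (Q : Matrix κ ι (Polynomial K)) (E : Matrix ι n K) (J : Matrix n n K) : Matrix κ n K :=
  fun i => ∑ j, Matrix.vecMul (E j) (Polynomial.aeval J (Q i j))

/-- The `s`-leading matrix of `R`: if row `i` has `s`-degree `d`, its `(i,j)` entry is
the coefficient of degree `d - s j` in `R i j` (and `0` if row `i` is zero). -/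
noncomputable def leadingMatrix {K : Type*} [Field K] {ι : Type*} [Fintype ι]
    (s : ι → ℤ) (R : Matrix ι ι (Polynomial K)) : Matrix ι ι K := fun i j =>
  WithBot.recBotCoe 0
    (fun d => if 0 ≤ d - s j then (R i j).coeff (d - s j).toNat else 0)
    (sdeg s (R i))

set_option maxHeartbeats 1000000

noncomputable def interpSub {K : Type*} [Field K] {m σ : ℕ}
    (E : Matrix (Fin m) (Fin σ) K) (J : Matrix (Fin σ) (Fin σ) K) :
    Submodule (Polynomial K) (Fin m → Polynomial K) where
  carrier := {p | IsInterpolant E J p}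
  zero_mem' := by simp [IsInterpolant]
  add_mem' := by
    intro p q hp hq
    have : (∑ i, vecMul (E i) (aeval J (p i))) + (∑ i, vecMul (E i) (aeval J (q i))) = 0 := by
      rw [hp, hq]; simp
    simpa [IsInterpolant, Finset.sum_add_distrib, Matrix.vecMul_add, map_add] using this
  smul_mem' := by
    intro c p hp
    have hp' : (∑ i, vecMul (E i) (aeval J (p i))) = 0 := hp
    show ∑ i, vecMul (E i) (aeval J (c * p i)) = 0
    have key : ∀ i, vecMul (E i) (aeval J (c * p i))
        = (aeval J c).vecMulLinear (vecMul (E i) (aeval J (p i))) := by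
      intro i
      rw [Matrix.vecMulLinear_apply, mul_comm c (p i), _root_.map_mul (aeval J) (p i) c,
        ← Matrix.vecMul_vecMul]
    rw [Finset.sum_congr rfl fun i _ => key i, ← map_sum, hp', map_zero]

theorem mem_interpSub {K : Type*} [Field K] {m σ : ℕ}
    (E : Matrix (Fin m) (Fin σ) K) (J : Matrix (Fin σ) (Fin σ) K) (p : Fin m → Polynomial K) :
    p ∈ interpSub E J ↔ IsInterpolant E J p := Iff.rfl

theorem interpSub_coe {K : Type*} [Field K] {m σ : ℕ}
    (E : Matrix (Fin m) (Fin σ) K) (J : Matrix (Fin σ) (Fin σ) K) :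
    (interpSub E J : Set (Fin m → Polynomial K)) = {p | IsInterpolant E J p} := rfl


/-- the set of interpolants for `(E, J)` is a `K[X]`-submodule of
`K[X]^{1×m}` which is free of rank `m`. -/
theorem interpolants_form_free_module_of_rank {K : Type*} [Field K] {m σ : ℕ}
    (hm : 1 ≤ m) (hσ : 1 ≤ σ)
    (E : Matrix (Fin m) (Fin σ) K) (J : Matrix (Fin σ) (Fin σ) K) :
    ∃ N : Submodule (Polynomial K) (Fin m → Polynomial K),
      (N : Set (Fin m → Polynomial K)) = {p | IsInterpolant E J p} ∧
        Nonempty (Module.Basis (Fin m) (Polynomial K) N) := by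
  classical
  refine ⟨interpSub E J, interpSub_coe E J, ?_⟩
  obtain ⟨n, bN⟩ := Submodule.basisOfPid (Pi.basisFun (Polynomial K) (Fin m))
    (interpSub E J)
  set c := J.charpoly with hc
  have hcne : c ≠ 0 := (Matrix.charpoly_monic J).ne_zero
  have hmem : ∀ i : Fin m, Pi.single i c ∈ interpSub E J := by
    intro i
    rw [mem_interpSub]
    show ∑ k, vecMul (E k) (aeval J ((Pi.single i c : Fin m → Polynomial K) k)) = 0
    rw [Finset.sum_eq_single i]
    · rw [Pi.single_eq_same, hc, Matrix.aeval_self_charpoly, Matrix.vecMul_zero]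
    · intro k _ hk
      simp [Pi.single_eq_of_ne hk]
    · simp
  have hsingle : LinearIndependent (Polynomial K) (fun i : Fin m => Pi.single i c :
      Fin m → Fin m → Polynomial K) := by
    rw [Fintype.linearIndependent_iff]
    intro g hg i
    have := congrFun hg i
    simp only [Finset.sum_apply, Pi.smul_apply, Pi.zero_apply, smul_eq_mul] at this
    rw [Finset.sum_eq_single i] at this
    · simp only [Pi.single_eq_same] at this
      exact (mul_eq_zero.mp this).resolve_right hcne
    · intro k _ hk
      simp [Pi.single_eq_of_ne hk.symm]
    · simp
  have hfind : LinearIndependent (Polynomial K)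
      (fun i : Fin m => (⟨Pi.single i c, hmem i⟩ : interpSub E J)) := by
    apply LinearIndependent.of_comp (interpSub E J).subtype
    exact hsingle
  have h1 : m ≤ n := by
    simpa using bN.card_le_card_of_linearIndependent hfind
  have h2 : n ≤ m := by
    have : LinearIndependent (Polynomial K)
        (fun i => ((bN i : interpSub E J) : Fin m → Polynomial K)) :=
      bN.linearIndependent.map' (interpSub E J).subtype (interpSub E J).ker_subtype
    simpa using (Pi.basisFun (Polynomial K) (Fin m)).card_le_card_of_linearIndependent this
  exact ⟨bN.reindex (finCongr (le_antisymm h2 h1))⟩
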